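/- Let G be a graph of order n with minimum degree δ(G) ≥ 2n/3. Then every integer root of the total domination polynomial D_t(G, x) lies in the set {−3, −2, −1, 0}. -/

import Mathlib

/-- `D` is a total dominating set of `G`: every vertex has a neighbor in `D`. -/
def IsTotalDomSet {V : Type*} (G : SimpleGraph V) (D : Finset V) : Prop :=
  ∀ v : V, ∃ u ∈ D, G.Adj v u

/-- `dt G i` is the number of total dominating sets of `G` of cardinality `i`. -/
noncomputable def dt {V : Type*} [Fintype V] (G : SimpleGraph V) (i : ℕ) : ℕ :=
  Nat.card {D : Finset V // D.card = i ∧ IsTotalDomSet G D}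

/-- The total domination polynomial of `G`, as a real function. -/
noncomputable def Dt {V : Type*} [Fintype V] (G : SimpleGraph V) (x : ℝ) : ℝ :=
  ∑ i ∈ Finset.range (Fintype.card V + 1), (dt G i : ℝ) * x ^ i

/-- The total domination number of `G`. -/
noncomputable def gammaT {V : Type*} (G : SimpleGraph V) : ℕ :=
  sInf {k : ℕ | ∃ D : Finset V, D.card = k ∧ IsTotalDomSet G D}

open Finset

section Aux

variable {V : Type*} [Fintype V] [DecidableEq V]

-- step 1: sum over powerset
lemma sum_powerset_pow (s : Finset V) (x : ℝ) :
    ∑ t ∈ s.powerset, x ^ t.card = (1 + x) ^ s.card := by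
  induction s using Finset.induction with
  | empty => simp
  | insert a s ha ih =>
    have hdisj : Disjoint s.powerset (s.powerset.image (insert a)) := by
      rw [Finset.disjoint_left]
      intro t ht ht'
      obtain ⟨u, hu, rfl⟩ := Finset.mem_image.mp ht'
      exact ha (Finset.mem_powerset.mp ht (Finset.mem_insert_self a u))
    have hinj : ∀ t ∈ s.powerset, ∀ t' ∈ s.powerset, insert a t = insert a t' → t = t' := by
      intro t ht t' ht' h
      have h1 : (insert a t).erase a = (insert a t').erase a := by rw [h]
      rwa [Finset.erase_insert (fun h => ha (Finset.mem_powerset.mp ht h)),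
        Finset.erase_insert (fun h => ha (Finset.mem_powerset.mp ht' h))] at h1
    have h2 : ∀ t ∈ s.powerset, x ^ (insert a t).card = x * x ^ t.card := by
      intro t ht
      rw [Finset.card_insert_of_notMem (fun h => ha (Finset.mem_powerset.mp ht h)), pow_succ]
      ring
    rw [Finset.powerset_insert, Finset.sum_union hdisj, Finset.sum_image hinj,
      Finset.card_insert_of_notMem ha, Finset.sum_congr rfl h2, ← Finset.mul_sum, ih, pow_succ]
    ring

instance (G : SimpleGraph V) [DecidableRel G.Adj] : DecidablePred (IsTotalDomSet G) :=
  fun _ => Fintype.decidableForallFintype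

-- step 2: Dt as a sum over all sets
lemma Dt_eq_sum (G : SimpleGraph V) [DecidableRel G.Adj] (x : ℝ) :
    Dt G x = ∑ D ∈ (univ : Finset (Finset V)),
      (if IsTotalDomSet G D then x ^ D.card else 0) := by
  rw [← Finset.sum_filter]
  rw [← Finset.sum_fiberwise_of_maps_to (g := Finset.card)
      (t := Finset.range (Fintype.card V + 1))
      (fun D _ => Finset.mem_range.mpr (Nat.lt_succ_of_le (Finset.card_le_univ D)))]
  unfold Dt dt
  apply Finset.sum_congr rfl
  intro i _
  have h1 : ∀ D ∈ ({D ∈ univ | IsTotalDomSet G D} : Finset (Finset V)).filter (fun D => D.card = i),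
      x ^ D.card = x ^ i := by
    intro D hD
    rw [(Finset.mem_filter.mp hD).2]
  rw [Finset.sum_congr rfl h1, Finset.sum_const, nsmul_eq_mul]
  congr 1
  rw [Nat.card_eq_fintype_card, Fintype.card_subtype]
  norm_cast
  apply congrArg
  rw [Finset.filter_filter]
  apply Finset.filter_congr
  intro D _
  exact and_comm

-- step 3: sum over subsets of B, via indicator
lemma sum_subset_pow (B : Finset V) (x : ℝ) :
    ∑ D ∈ (univ : Finset (Finset V)), (if D ⊆ B then x ^ D.card else 0)
      = (1 + x) ^ B.card := by
  rw [← Finset.sum_filter]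
  rw [show Finset.filter (fun D => D ⊆ B) (univ : Finset (Finset V)) = B.powerset by
    ext t; simp [Finset.mem_powerset]]
  exact sum_powerset_pow B x

-- step 4: inclusion-exclusion on the indicator of total domination
lemma indicator_eq (G : SimpleGraph V) [DecidableRel G.Adj] (D : Finset V) :
    (if IsTotalDomSet G D then (1:ℝ) else 0)
      = ∑ S ∈ (univ : Finset (Finset V)),
          (-1:ℝ) ^ S.card * (if D ⊆ (S.biUnion (fun v => G.neighborFinset v))ᶜ then 1 else 0) := by
  have h1 : (if IsTotalDomSet G D then (1:ℝ) else 0)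
      = ∏ v : V, (if ∃ u ∈ D, G.Adj v u then (1:ℝ) else 0) := by
    by_cases h : IsTotalDomSet G D
    · rw [if_pos h, eq_comm]
      exact Finset.prod_eq_one (fun v _ => if_pos (h v))
    · rw [if_neg h, eq_comm]
      obtain ⟨v, hv⟩ := not_forall.mp h
      exact Finset.prod_eq_zero (Finset.mem_univ v) (if_neg hv)
  have h2 : ∀ v : V, (if ∃ u ∈ D, G.Adj v u then (1:ℝ) else 0)
      = (-(if ∀ u ∈ D, ¬ G.Adj v u then (1:ℝ) else 0)) + 1 := by
    intro v
    by_cases h : ∃ u ∈ D, G.Adj v u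
    · rw [if_pos h, if_neg (by push_neg; exact h)]
      ring
    · rw [if_neg h, if_pos (by push_neg at h; exact h)]
      ring
  rw [h1]
  simp_rw [h2]
  rw [Finset.prod_add, Finset.powerset_univ]
  apply Finset.sum_congr rfl
  intro S _
  rw [Finset.prod_const_one, mul_one]
  rw [Finset.prod_congr rfl (fun i (_ : i ∈ S) => (neg_one_mul
    (if ∀ u ∈ D, ¬ G.Adj i u then (1:ℝ) else 0)).symm),
    Finset.prod_mul_distrib, Finset.prod_const]
  congr 1
  rw [Finset.prod_boole]
  congr 1
  simp only [eq_iff_iff, Finset.subset_iff, Finset.mem_compl, Finset.mem_biUnion,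
    SimpleGraph.mem_neighborFinset]
  constructor
  · intro h u hu ⟨v, hv, hadj⟩
    exact h v hv u hu hadj
  · intro h v hv u hu hadj
    exact h hu ⟨v, hv, hadj⟩

-- step 5: the master identity
lemma master (G : SimpleGraph V) [DecidableRel G.Adj] (x : ℝ) :
    Dt G x = ∑ S ∈ (univ : Finset (Finset V)),
      (-1:ℝ) ^ S.card * (1 + x) ^ ((S.biUnion (fun v => G.neighborFinset v))ᶜ).card := by
  rw [Dt_eq_sum]
  have h : ∀ D : Finset V, (if IsTotalDomSet G D then x ^ D.card else 0)
      = (if IsTotalDomSet G D then (1:ℝ) else 0) * x ^ D.card := by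
    intro D; split <;> ring
  simp_rw [h, indicator_eq, Finset.sum_mul]
  rw [Finset.sum_comm]
  apply Finset.sum_congr rfl
  intro S _
  rw [← sum_subset_pow ((S.biUnion (fun v => G.neighborFinset v))ᶜ) x, Finset.mul_sum]
  apply Finset.sum_congr rfl
  intro D _
  split <;> ring

end Aux

theorem total_domination_integer_roots {V : Type*} [Fintype V]
    (G : SimpleGraph V) [DecidableRel G.Adj]
    (hδ : (2 * Fintype.card V : ℝ) / 3 ≤ G.minDegree)
    (z : ℤ) (hz : Dt G (z : ℝ) = 0) :
    z ∈ ({-3, -2, -1, 0} : Set ℤ) := by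
  classical
  set n := Fintype.card V with hn
  set δ := G.minDegree with hdel
  by_cases hn0 : n = 0
  · -- empty graph: Dt = 1 ≠ 0
    exfalso
    haveI : IsEmpty V := Fintype.card_eq_zero_iff.mp hn0
    have h1 : dt G 0 = 1 := by
      rw [dt, Nat.card_eq_one_iff_unique]
      constructor
      · constructor
        intro ⟨D, hD, _⟩ ⟨D', hD', _⟩
        have : D = D' := by
          rw [Finset.card_eq_zero] at hD hD'
          rw [hD, hD']
        exact Subtype.ext this
      · exact ⟨⟨∅, by simp, fun v => (IsEmpty.false v).elim⟩⟩
    rw [Dt, ← hn, hn0] at hz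
    simp [h1] at hz
  have hn1 : 1 ≤ n := Nat.one_le_iff_ne_zero.mpr hn0
  have h2n3 : 2 * n ≤ 3 * δ := by
    have : (2 * n : ℝ) ≤ 3 * δ := by
      rw [div_le_iff₀ (by norm_num)] at hδ
      push_cast
      linarith
    exact_mod_cast this
  have hδ1 : 1 ≤ δ := by omega
  -- every vertex has a neighbor
  have hnbr : ∀ v : V, ∃ u, G.Adj v u := by
    intro v
    have h1 : 1 ≤ G.degree v := hδ1.trans (G.minDegree_le_degree v)
    obtain ⟨u, hu⟩ := Finset.card_pos.mp h1
    exact ⟨u, (SimpleGraph.mem_neighborFinset G v u).mp hu⟩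
  rcases le_or_gt 1 z with hz1 | hz1
  · -- positive z: Dt > 0
    exfalso
    have hx1 : (1:ℝ) ≤ (z:ℝ) := by exact_mod_cast hz1
    have hdtn : 1 ≤ dt G n := by
      have hne : Nonempty {D : Finset V // D.card = n ∧ IsTotalDomSet G D} := by
        refine ⟨⟨univ, Finset.card_univ, fun v => ?_⟩⟩
        obtain ⟨u, hu⟩ := hnbr v
        exact ⟨u, Finset.mem_univ u, hu⟩
      exact Nat.card_pos
    have hterm : ∀ i ∈ Finset.range (n + 1), (0:ℝ) ≤ (dt G i : ℝ) * (z:ℝ) ^ i := by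
      intro i _
      have : (0:ℝ) ≤ (z:ℝ) ^ i := pow_nonneg (by linarith) i
      positivity
    have hle : (dt G n : ℝ) * (z:ℝ) ^ n ≤ Dt G (z:ℝ) :=
      Finset.single_le_sum hterm (Finset.self_mem_range_succ n)
    have h1 : (1:ℝ) ≤ (dt G n : ℝ) * (z:ℝ) ^ n := by
      have ha : (1:ℝ) ≤ (dt G n : ℝ) := by exact_mod_cast hdtn
      have hb : (1:ℝ) ≤ (z:ℝ) ^ n := one_le_pow₀ hx1
      nlinarith
    rw [hz] at hle
    linarith
  rcases le_or_gt z (-4) with hz4 | hz4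
  · -- hard case: z ≤ -4, excluded by the root bound
    exfalso
    set x : ℝ := (z : ℝ) with hxdef
    set r : ℝ := -(1 + x) with hr
    have hxle : x ≤ -4 := by rw [hxdef]; exact_mod_cast hz4
    have hr3 : (3:ℝ) ≤ r := by rw [hr]; linarith
    have hr1 : (1:ℝ) ≤ r := by linarith
    have habs : |1 + x| = r := by rw [abs_of_nonpos (by linarith), hr]
    have hmaster := master G x
    rw [hz] at hmaster
    rw [← Finset.add_sum_erase _ _ (Finset.mem_univ (∅ : Finset V))] at hmaster
    have hempty : ((-1:ℝ) ^ (∅ : Finset V).card *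
        (1 + x) ^ (((∅ : Finset V).biUnion (fun v => G.neighborFinset v))ᶜ).card)
          = (1 + x) ^ n := by
      simp [hn]
    rw [hempty] at hmaster
    have hbound : ∀ S ∈ (univ : Finset (Finset V)).erase ∅,
        |(-1:ℝ) ^ S.card * (1 + x) ^ ((S.biUnion (fun v => G.neighborFinset v))ᶜ).card|
          ≤ r ^ (n - δ) := by
      intro S hS
      obtain ⟨v, hv⟩ := Finset.nonempty_iff_ne_empty.mpr (Finset.ne_of_mem_erase hS)
      have hcard : δ ≤ (S.biUnion (fun v => G.neighborFinset v)).card := by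
        calc δ ≤ G.degree v := G.minDegree_le_degree v
        _ ≤ _ := Finset.card_le_card (Finset.subset_biUnion_of_mem (fun v => G.neighborFinset v) hv)
      have hc : ((S.biUnion (fun v => G.neighborFinset v))ᶜ).card ≤ n - δ := by
        rw [Finset.card_compl, ← hn]
        omega
      rw [abs_mul, abs_pow, abs_pow, abs_neg, abs_one, one_pow, one_mul, habs]
      exact pow_le_pow_right₀ hr1 hc
    have hcarde : ((univ : Finset (Finset V)).erase ∅).card = 2 ^ n - 1 := by
      rw [Finset.card_erase_of_mem (Finset.mem_univ _), Finset.card_univ,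
        Fintype.card_finset, hn]
    have hsum : r ^ n ≤ ((2 ^ n - 1 : ℕ) : ℝ) * r ^ (n - δ) := by
      have h1 : r ^ n = |(1 + x) ^ n| := by rw [abs_pow, habs]
      rw [h1, show (1 + x) ^ n = -∑ S ∈ (univ : Finset (Finset V)).erase ∅,
          (-1:ℝ) ^ S.card * (1 + x) ^ ((S.biUnion (fun v => G.neighborFinset v))ᶜ).card by
        linarith, abs_neg]
      calc |∑ S ∈ (univ : Finset (Finset V)).erase ∅,
          (-1:ℝ) ^ S.card * (1 + x) ^ ((S.biUnion (fun v => G.neighborFinset v))ᶜ).card|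
          ≤ ∑ S ∈ (univ : Finset (Finset V)).erase ∅,
            |(-1:ℝ) ^ S.card * (1 + x) ^ ((S.biUnion (fun v => G.neighborFinset v))ᶜ).card| :=
          Finset.abs_sum_le_sum_abs _ _
        _ ≤ ∑ _S ∈ (univ : Finset (Finset V)).erase ∅, r ^ (n - δ) :=
          Finset.sum_le_sum hbound
        _ = ((2 ^ n - 1 : ℕ) : ℝ) * r ^ (n - δ) := by
          rw [Finset.sum_const, nsmul_eq_mul, hcarde]
    have hv0 : Nonempty V := Fintype.card_pos_iff.mp (by omega)
    obtain ⟨v0⟩ := hv0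
    have hδn : δ ≤ n := by
      have := (G.minDegree_le_degree v0).trans (G.degree_lt_card_verts v0).le
      omega
    have hrpos : (0:ℝ) < r ^ (n - δ) := pow_pos (by linarith) _
    have hrd : r ^ δ ≤ ((2 ^ n - 1 : ℕ) : ℝ) := by
      have h2 : r ^ δ * r ^ (n - δ) ≤ ((2 ^ n - 1 : ℕ) : ℝ) * r ^ (n - δ) := by
        rw [← pow_add, Nat.add_sub_cancel' hδn]
        exact hsum
      exact le_of_mul_le_mul_right h2 hrpos
    have h23 : (2:ℕ) ^ n ≤ 3 ^ δ := by
      have hcube : ((2:ℕ) ^ n) ^ 3 ≤ ((3:ℕ) ^ δ) ^ 3 := by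
        calc ((2:ℕ) ^ n) ^ 3 = 8 ^ n := by
              rw [← pow_mul, Nat.mul_comm, pow_mul]; norm_num
          _ ≤ 9 ^ n := Nat.pow_le_pow_left (by norm_num) n
          _ = 3 ^ (2 * n) := by rw [pow_mul]; norm_num
          _ ≤ 3 ^ (3 * δ) := Nat.pow_le_pow_right (by norm_num) h2n3
          _ ≤ ((3:ℕ) ^ δ) ^ 3 := by rw [← pow_mul, Nat.mul_comm]
      exact (Nat.pow_le_pow_iff_left (by norm_num)).mp hcube
    have h3r : (3:ℝ) ^ δ ≤ r ^ δ := pow_le_pow_left₀ (by norm_num) hr3 δ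
    have hlt : ((2 ^ n - 1 : ℕ) : ℝ) < (3:ℝ) ^ δ := by
      have h1 : ((2 ^ n - 1 : ℕ) : ℝ) < ((2 ^ n : ℕ) : ℝ) := by
        exact_mod_cast Nat.sub_lt (Nat.pow_pos (n := n) (by norm_num : 0 < 2)) one_pos
      have h2 : ((2 ^ n : ℕ) : ℝ) ≤ ((3 ^ δ : ℕ) : ℝ) := by exact_mod_cast h23
      have h3 : ((3 ^ δ : ℕ) : ℝ) = (3:ℝ) ^ δ := by push_cast; ring
      linarith
    linarith
  · -- easy case: -3 ≤ z ≤ 0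
    simp only [Set.mem_insert_iff, Set.mem_singleton_iff]
    omega
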